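/- Let (x₁,p₁), (x₂,p₂) : ℝ → ℝ² be two solutions of the Hamiltonian Kummer–Schwarz system x' = p x³/2, p' = −3p²x²/4 − b₀/4 + 4b₁(t)/x², with x₁, x₂ nowhere vanishing. Then F(t) = [b₀(x₁(t)+x₂(t))² + (p₁(t)x₁(t)² − p₂(t)x₂(t)²)²] / (x₁(t)x₂(t)) is constant in t. -/

import Mathlib

/-- for two solutions (x₁,p₁), (x₂,p₂) of the Hamiltonian Kummer–Schwarz
system x' = p x³/2, p' = −3p²x²/4 − b₀/4 + 4b₁(t)/x² (with x₁, x₂ nowhere vanishing), the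
function F = (b₀(x₁+x₂)² + (p₁x₁² − p₂x₂²)²)/(x₁x₂) is constant in t. -/
theorem kummerSchwarz_first_integral
    (b₀ : ℝ) (b₁ : ℝ → ℝ) (hb₁ : Continuous b₁)
    (x₁ p₁ x₂ p₂ : ℝ → ℝ)
    (hx₁0 : ∀ t, x₁ t ≠ 0) (hx₂0 : ∀ t, x₂ t ≠ 0)
    (hx₁ : ∀ t, HasDerivAt x₁ (p₁ t * (x₁ t) ^ 3 / 2) t)
    (hp₁ : ∀ t, HasDerivAt p₁
      (-3 * (p₁ t) ^ 2 * (x₁ t) ^ 2 / 4 - b₀ / 4 + 4 * b₁ t / (x₁ t) ^ 2) t)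
    (hx₂ : ∀ t, HasDerivAt x₂ (p₂ t * (x₂ t) ^ 3 / 2) t)
    (hp₂ : ∀ t, HasDerivAt p₂
      (-3 * (p₂ t) ^ 2 * (x₂ t) ^ 2 / 4 - b₀ / 4 + 4 * b₁ t / (x₂ t) ^ 2) t)
    (F : ℝ → ℝ)
    (hF : ∀ t, F t = (b₀ * (x₁ t + x₂ t) ^ 2 +
        (p₁ t * (x₁ t) ^ 2 - p₂ t * (x₂ t) ^ 2) ^ 2) / (x₁ t * x₂ t)) :
    ∀ t, HasDerivAt F 0 t := by
  have hFeq : F = fun t => (b₀ * (x₁ t + x₂ t) ^ 2 +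
      (p₁ t * (x₁ t) ^ 2 - p₂ t * (x₂ t) ^ 2) ^ 2) / (x₁ t * x₂ t) := funext hF
  intro t
  have h1 := hx₁ t
  have h2 := hp₁ t
  have h3 := hx₂ t
  have h4 := hp₂ t
  -- numerator derivative
  have hN : HasDerivAt (fun t => b₀ * (x₁ t + x₂ t) ^ 2 +
      (p₁ t * (x₁ t) ^ 2 - p₂ t * (x₂ t) ^ 2) ^ 2)
      (b₀ * ((2 : ℕ) * (x₁ t + x₂ t) ^ 1 * (p₁ t * (x₁ t) ^ 3 / 2 + p₂ t * (x₂ t) ^ 3 / 2))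
        + (2 : ℕ) * (p₁ t * (x₁ t) ^ 2 - p₂ t * (x₂ t) ^ 2) ^ 1 *
          (((-3 * (p₁ t) ^ 2 * (x₁ t) ^ 2 / 4 - b₀ / 4 + 4 * b₁ t / (x₁ t) ^ 2) * (x₁ t) ^ 2
            + p₁ t * ((2 : ℕ) * (x₁ t) ^ 1 * (p₁ t * (x₁ t) ^ 3 / 2)))
          - ((-3 * (p₂ t) ^ 2 * (x₂ t) ^ 2 / 4 - b₀ / 4 + 4 * b₁ t / (x₂ t) ^ 2) * (x₂ t) ^ 2
            + p₂ t * ((2 : ℕ) * (x₂ t) ^ 1 * (p₂ t * (x₂ t) ^ 3 / 2))))) t := by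
    exact (((h1.add h3).pow 2).const_mul b₀).add
      (((h2.mul (h1.pow 2)).sub (h4.mul (h3.pow 2))).pow 2)
  have hD : HasDerivAt (fun t => x₁ t * x₂ t)
      (p₁ t * (x₁ t) ^ 3 / 2 * x₂ t + x₁ t * (p₂ t * (x₂ t) ^ 3 / 2)) t := h1.mul h3
  have hdiv := hN.div hD (mul_ne_zero (hx₁0 t) (hx₂0 t))
  rw [hFeq]
  convert hdiv using 1
  · rfl
  · rfl
  · rfl
  have hx1 := hx₁0 t
  have hx2 := hx₂0 t
  field_simp
  ring
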